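/- (Tensorization of entropy) Let (Ω_i, G_i, μ_i), i ≥ 1, be probability spaces and consider the product probability space (∏_{i=1}^∞ Ω_i, F, μ = ∏_{i=1}^∞ μ_i) where F is the product σ-algebra. Let X be a nonnegative F-measurable random variable with Ent_μ(X) well-defined (X and X log X integrable). Then Ent_μ(X) ≤ Σ_{i=1}^∞ E_μ[Ent_i(X)], where Ent_i(X) denotes the entropy of ω ↦ X(ω₁, ..., ω_i, ...) with respect to μ_i as a function of the i-th coordinate only, with all other coordinates held fixed. -/

import Mathlib

open MeasureTheory ProbabilityTheory
open scoped ENNReal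
set_option linter.unusedSectionVars false

/-- The entropy `Ent(Y) = E[Y log Y] − E[Y] log E[Y]` of a nonnegative random variable,
valued in `[0, ∞]`: it is `+∞` when `Y log Y` fails to be integrable. -/
noncomputable def entNN {Ω : Type*} [MeasurableSpace Ω] (μ : Measure Ω) (Y : Ω → ℝ) :
    ℝ≥0∞ :=
  open Classical in
  if Integrable (fun ω => Y ω * Real.log (Y ω)) μ then
    ENNReal.ofReal (∫ ω, Y ω * Real.log (Y ω) ∂μ
      - (∫ ω, Y ω ∂μ) * Real.log (∫ ω, Y ω ∂μ))
  else ∞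

namespace EntTensor

/-! ### Elementary facts about `φ t = t * log t` -/

lemma phi_lb {t : ℝ} (ht : 0 ≤ t) : -(Real.exp 1)⁻¹ ≤ t * Real.log t := by
  rcases eq_or_lt_of_le ht with h | h
  · simp [← h]
    positivity
  · have h1 := Real.add_one_le_exp (-Real.log t - 1)
    have h2 : Real.exp (-Real.log t - 1) = t⁻¹ * (Real.exp 1)⁻¹ := by
      rw [sub_eq_add_neg, Real.exp_add, Real.exp_neg, Real.exp_neg, Real.exp_log h]
    rw [h2] at h1
    have h3 : -Real.log t ≤ t⁻¹ * (Real.exp 1)⁻¹ := by linarith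
    have h4 : t * (-Real.log t) ≤ t * (t⁻¹ * (Real.exp 1)⁻¹) :=
      mul_le_mul_of_nonneg_left h3 ht
    have h5 : t * (t⁻¹ * (Real.exp 1)⁻¹) = (Real.exp 1)⁻¹ := by
      field_simp
    nlinarith
lemma abs_phi_le {t : ℝ} (ht : 0 ≤ t) :
    |t * Real.log t| ≤ t * Real.log t + 2 * (Real.exp 1)⁻¹ := by
  have h1 := phi_lb ht
  have h2 : (0:ℝ) < (Real.exp 1)⁻¹ := by positivity
  rcases abs_cases (t * Real.log t) with ⟨h, _⟩ | ⟨h, _⟩ <;> rw [h] <;> linarith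

/-- Jensen's inequality for `φ t = t * log t`. -/
lemma jensen_phi {α : Type*} [MeasurableSpace α] {κ : Measure α} [IsProbabilityMeasure κ]
    {u : α → ℝ} (hu : Integrable u κ) (hnn : ∀ᵐ y ∂κ, 0 ≤ u y)
    (hφ : Integrable (fun y => u y * Real.log (u y)) κ) :
    (∫ y, u y ∂κ) * Real.log (∫ y, u y ∂κ) ≤ ∫ y, u y * Real.log (u y) ∂κ :=
  Real.convexOn_mul_log.map_integral_le Real.continuous_mul_log.continuousOn isClosed_Ici
    (hnn.mono fun _ h => Set.mem_Ici.2 h) hu hφ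

lemma ofReal_max_zero (x : ℝ) : ENNReal.ofReal (max x 0) = ENNReal.ofReal x := by
  rcases le_total x 0 with h | h
  · rw [max_eq_right h, ENNReal.ofReal_zero, ENNReal.ofReal_of_nonpos h]
  · rw [max_eq_left h]

lemma ofReal_integral_le {α : Type*} [MeasurableSpace α] {ν : Measure α} {f : α → ℝ}
    (hf : Integrable f ν) :
    ENNReal.ofReal (∫ x, f x ∂ν) ≤ ∫⁻ x, ENNReal.ofReal (f x) ∂ν := by
  have h1 : ∫ x, f x ∂ν ≤ ∫ x, max (f x) 0 ∂ν :=
    integral_mono hf hf.pos_part fun x => le_max_left _ _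
  calc ENNReal.ofReal (∫ x, f x ∂ν) ≤ ENNReal.ofReal (∫ x, max (f x) 0 ∂ν) :=
        ENNReal.ofReal_le_ofReal h1
    _ = ∫⁻ x, ENNReal.ofReal (max (f x) 0) ∂ν :=
        ofReal_integral_eq_lintegral_ofReal hf.pos_part
          (Filter.Eventually.of_forall fun x => le_max_right _ _)
    _ = ∫⁻ x, ENNReal.ofReal (f x) ∂ν := by simp_rw [ofReal_max_zero]

lemma ofReal_sum_le {ι : Type*} (s : Finset ι) (f : ι → ℝ) :
    ENNReal.ofReal (∑ i ∈ s, f i) ≤ ∑ i ∈ s, ENNReal.ofReal (f i) := by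
  classical
  induction s using Finset.induction with
  | empty => simp
  | insert _ _ hx ih =>
    rw [Finset.sum_insert hx, Finset.sum_insert hx]
    exact (ENNReal.ofReal_add_le).trans (add_le_add le_rfl ih)

/-! ### The merge map and the product structure of `μ` -/

variable {Ω : ℕ → Type} [∀ i, MeasurableSpace (Ω i)]

/-- Merge two points of the product space: coordinates in `S` from the first,
the others from the second. -/
noncomputable def mrg (S : Set ℕ) (σ τ : ∀ i, Ω i) : ∀ i, Ω i := fun i =>
  haveI := Classical.propDecidable (i ∈ S)
  if i ∈ S then σ i else τ i

lemma mrg_mem {S : Set ℕ} {i : ℕ} (h : i ∈ S) (σ τ : ∀ i, Ω i) : mrg S σ τ i = σ i := by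
  simp only [mrg]; rw [if_pos h]

lemma mrg_not_mem {S : Set ℕ} {i : ℕ} (h : i ∉ S) (σ τ : ∀ i, Ω i) : mrg S σ τ i = τ i := by
  simp only [mrg]; rw [if_neg h]

lemma measurable_mrg (S : Set ℕ) :
    Measurable fun p : (∀ i, Ω i) × (∀ i, Ω i) => mrg S p.1 p.2 := by
  apply measurable_pi_lambda
  intro i
  by_cases h : i ∈ S
  · have : (fun p : (∀ i, Ω i) × (∀ i, Ω i) => mrg S p.1 p.2 i) = fun p => p.1 i := by
      funext p; exact mrg_mem h _ _
    rw [this]; exact (measurable_pi_apply i).comp measurable_fst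
  · have : (fun p : (∀ i, Ω i) × (∀ i, Ω i) => mrg S p.1 p.2 i) = fun p => p.2 i := by
      funext p; exact mrg_not_mem h _ _
    rw [this]; exact (measurable_pi_apply i).comp measurable_snd

lemma mrg_univ (σ τ : ∀ i, Ω i) : mrg Set.univ σ τ = σ := by
  funext i; exact mrg_mem (Set.mem_univ i) _ _

lemma mrg_singleton (i : ℕ) (σ τ : ∀ i, Ω i) :
    mrg {i} σ τ = Function.update τ i (σ i) := by
  funext j
  by_cases h : j = i
  · subst h; rw [Function.update_self]; exact mrg_mem (Set.mem_singleton j) _ _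
  · rw [Function.update_of_ne h]; exact mrg_not_mem (by simpa using h) _ _

lemma mrg_mrg (T S : Set ℕ) (σ' σ τ : ∀ i, Ω i) :
    mrg T σ' (mrg S σ τ) = mrg (S ∪ T) (mrg T σ' σ) τ := by
  funext i
  by_cases hT : i ∈ T
  · rw [mrg_mem hT, mrg_mem (Set.mem_union_right _ hT), mrg_mem hT]
  · rw [mrg_not_mem hT]
    by_cases hS : i ∈ S
    · rw [mrg_mem hS, mrg_mem (Set.mem_union_left _ hS), mrg_not_mem hT]
    · rw [mrg_not_mem hS, mrg_not_mem (fun h => h.elim hS hT)]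

lemma mrg_mrg_same (S : Set ℕ) (σ ρ τ : ∀ i, Ω i) :
    mrg S σ (mrg S ρ τ) = mrg S σ τ := by
  funext i
  by_cases h : i ∈ S
  · rw [mrg_mem h, mrg_mem h]
  · rw [mrg_not_mem h, mrg_not_mem h, mrg_not_mem h]

lemma mrg_update {S : Set ℕ} {i : ℕ} (h : i ∉ S) (z τ : ∀ i, Ω i) (y : Ω i) :
    mrg S z (Function.update τ i y) = Function.update (mrg S z τ) i y := by
  funext j
  by_cases hj : j = i
  · subst hj
    rw [mrg_not_mem h, Function.update_self, Function.update_self]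
  · rw [Function.update_of_ne hj]
    by_cases hS : j ∈ S
    · rw [mrg_mem hS, mrg_mem hS]
    · rw [mrg_not_mem hS, mrg_not_mem hS, Function.update_of_ne hj]

/-- The rectangle cylinders. -/
def cylRect : Set (Set (∀ i, Ω i)) :=
  {t | ∃ (s : Finset ℕ) (A : ∀ i, Set (Ω i)), (∀ i, MeasurableSet (A i)) ∧ t = Set.pi ↑s A}

lemma univ_mem_cylRect : (Set.univ : Set (∀ i, Ω i)) ∈ cylRect :=
  ⟨∅, fun _ => Set.univ, fun _ => MeasurableSet.univ, by simp⟩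

lemma measurableSet_of_mem_cylRect {t : Set (∀ i, Ω i)} (ht : t ∈ cylRect) :
    MeasurableSet t := by
  obtain ⟨s, A, hA, rfl⟩ := ht
  exact MeasurableSet.pi s.countable_toSet fun i _ => hA i

lemma isPiSystem_cylRect : IsPiSystem (cylRect (Ω := Ω)) := by
  classical
  rintro t1 ⟨s, A, hA, rfl⟩ t2 ⟨u, B, hB, rfl⟩ -
  refine ⟨s ∪ u, fun i => (if i ∈ s then A i else Set.univ) ∩ (if i ∈ u then B i else Set.univ),
    fun i => ?_, ?_⟩
  · show MeasurableSet ((if i ∈ s then A i else Set.univ) ∩ (if i ∈ u then B i else Set.univ))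
    by_cases h1 : i ∈ s
    · rw [if_pos h1]
      by_cases h2 : i ∈ u
      · rw [if_pos h2]; exact (hA i).inter (hB i)
      · rw [if_neg h2]; exact (hA i).inter .univ
    · rw [if_neg h1]
      by_cases h2 : i ∈ u
      · rw [if_pos h2]; exact MeasurableSet.univ.inter (hB i)
      · rw [if_neg h2]; exact MeasurableSet.univ.inter .univ
  ext ω
  simp only [Set.mem_inter_iff, Set.mem_pi, Finset.coe_union, Set.mem_union, Finset.mem_coe]
  constructor
  · rintro ⟨h1, h2⟩ i hi
    constructor
    · by_cases h : i ∈ s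
      · rw [if_pos h]; exact h1 i h
      · rw [if_neg h]; trivial
    · by_cases h : i ∈ u
      · rw [if_pos h]; exact h2 i h
      · rw [if_neg h]; trivial
  · intro h
    constructor
    · intro i hi
      have := (h i (Or.inl hi)).1
      rwa [if_pos hi] at this
    · intro i hi
      have := (h i (Or.inr hi)).2
      rwa [if_pos hi] at this

lemma generateFrom_cylRect :
    (MeasurableSpace.pi : MeasurableSpace (∀ i, Ω i))
      = MeasurableSpace.generateFrom (cylRect (Ω := Ω)) := by
  classical
  refine le_antisymm ?_ ?_
  · have hco : ∀ i, @Measurable _ _ (MeasurableSpace.generateFrom (cylRect (Ω := Ω))) _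
        (fun ω : ∀ j, Ω j => ω i) := by
      intro i B hB
      apply MeasurableSpace.measurableSet_generateFrom
      refine ⟨{i}, Function.update (fun j => (Set.univ : Set (Ω j))) i B, ?_, ?_⟩
      · intro j
        by_cases h : j = i
        · subst h; rw [Function.update_self]; exact hB
        · rw [Function.update_of_ne h]; exact .univ
      · ext ω
        simp only [Set.mem_preimage, Finset.coe_singleton, Set.singleton_pi,
          Function.update_self]
    rw [MeasurableSpace.pi_eq_generateFrom_projections]
    refine MeasurableSpace.generateFrom_le ?_
    rintro _ ⟨i, B, hB, rfl⟩
    exact hco i hB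
  · refine MeasurableSpace.generateFrom_le fun t ht => measurableSet_of_mem_cylRect ht

section Measures

variable (μi : ∀ i, Measure (Ω i)) [∀ i, IsProbabilityMeasure (μi i)]
  (μ : Measure (∀ i, Ω i)) [IsProbabilityMeasure μ]

/-- The product property of `μ`. -/
def IsProd : Prop :=
  ∀ (s : Finset ℕ) (A : ∀ i, Set (Ω i)), (∀ i, MeasurableSet (A i)) →
    μ (Set.pi ↑s A) = ∏ i ∈ s, μi i (A i)

variable {μi μ}

/-- Key structural fact: merging two independent copies of `μ` gives back `μ`. -/
lemma map_mrg (hprod : IsProd μi μ) (S : Set ℕ) :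
    Measure.map (fun p : (∀ i, Ω i) × (∀ i, Ω i) => mrg S p.1 p.2) (μ.prod μ) = μ := by
  classical
  haveI : IsProbabilityMeasure
      (Measure.map (fun p : (∀ i, Ω i) × (∀ i, Ω i) => mrg S p.1 p.2) (μ.prod μ)) :=
    Measure.isProbabilityMeasure_map (measurable_mrg S).aemeasurable
  refine MeasureTheory.ext_of_generate_finite _ generateFrom_cylRect isPiSystem_cylRect ?_
    (by simp)
  rintro t ⟨s, A, hA, rfl⟩
  rw [Measure.map_apply (measurable_mrg S) (measurableSet_of_mem_cylRect ⟨s, A, hA, rfl⟩)]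
  have hpre : (fun p : (∀ i, Ω i) × (∀ i, Ω i) => mrg S p.1 p.2) ⁻¹' (Set.pi ↑s A)
      = (Set.pi ↑(s.filter (· ∈ S)) A) ×ˢ (Set.pi ↑(s.filter (· ∉ S)) A) := by
    ext p
    simp only [Set.mem_preimage, Set.mem_pi, Set.mem_prod, Finset.coe_filter,
      Set.mem_setOf_eq, Finset.mem_coe]
    constructor
    · intro h
      refine ⟨fun i hi => ?_, fun i hi => ?_⟩
      · rw [← mrg_mem hi.2 p.1 p.2]; exact h i hi.1
      · rw [← mrg_not_mem hi.2 p.1 p.2]; exact h i hi.1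
    · rintro ⟨h1, h2⟩ i hi
      by_cases hiS : i ∈ S
      · rw [mrg_mem hiS]; exact h1 i ⟨hi, hiS⟩
      · rw [mrg_not_mem hiS]; exact h2 i ⟨hi, hiS⟩
  rw [hpre, Measure.prod_prod, hprod _ _ hA, hprod _ _ hA, hprod _ _ hA,
    Finset.prod_filter_mul_prod_filter_not]

/-- The `i`-th marginal of `μ` is `μi i`. -/
lemma map_eval (hprod : IsProd μi μ) (i : ℕ) :
    Measure.map (fun ω : ∀ j, Ω j => ω i) μ = μi i := by
  refine Measure.ext fun B hB => ?_
  rw [Measure.map_apply (measurable_pi_apply i) hB]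
  have hpre : (fun ω : ∀ j, Ω j => ω i) ⁻¹' B
      = Set.pi ↑({i} : Finset ℕ) (Function.update (fun j => (Set.univ : Set (Ω j))) i B) := by
    rw [Finset.coe_singleton, Set.singleton_pi, Function.update_self]
  rw [hpre, hprod _ _ ?_, Finset.prod_singleton, Function.update_self]
  intro j
  by_cases h : j = i
  · subst h; rw [Function.update_self]; exact hB
  · rw [Function.update_of_ne h]; exact .univ

end Measures

section Avg

variable {μi : ∀ i, Measure (Ω i)} [∀ i, IsProbabilityMeasure (μi i)]
  {μ : Measure (∀ i, Ω i)} [IsProbabilityMeasure μ]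

/-- Average of `f` over the coordinates in `S`. -/
noncomputable def avg (μ : Measure (∀ i, Ω i)) (S : Set ℕ) (f : (∀ i, Ω i) → ℝ) :
    (∀ i, Ω i) → ℝ := fun τ => ∫ σ, f (mrg S σ τ) ∂μ

lemma measurable_mrg_left (S : Set ℕ) (τ : ∀ i, Ω i) :
    Measurable fun σ : ∀ i, Ω i => mrg S σ τ :=
  (measurable_mrg S).comp (measurable_id.prodMk measurable_const)

lemma measurable_mrg_right (S : Set ℕ) (σ : ∀ i, Ω i) :
    Measurable fun τ : ∀ i, Ω i => mrg S σ τ :=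
  (measurable_mrg S).comp (measurable_const.prodMk measurable_id)

lemma measurable_avg (S : Set ℕ) {f : (∀ i, Ω i) → ℝ} (hf : Measurable f) :
    Measurable (avg μ S f) :=
  ((hf.comp (measurable_mrg S)).stronglyMeasurable.integral_prod_left').measurable

lemma avg_nonneg (S : Set ℕ) {f : (∀ i, Ω i) → ℝ} (hnn : ∀ ω, 0 ≤ f ω) (τ : ∀ i, Ω i) :
    0 ≤ avg μ S f τ :=
  integral_nonneg fun _ => hnn _

lemma avg_univ (f : (∀ i, Ω i) → ℝ) (τ : ∀ i, Ω i) :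
    avg μ Set.univ f τ = ∫ ω, f ω ∂μ := by
  unfold avg; simp only [mrg_univ]

lemma integrable_mrg_comp (hprod : IsProd μi μ) (S : Set ℕ) {f : (∀ i, Ω i) → ℝ}
    (hfi : Integrable f μ) :
    Integrable (fun p : (∀ i, Ω i) × (∀ i, Ω i) => f (mrg S p.1 p.2)) (μ.prod μ) := by
  refine (integrable_map_measure ?_ (measurable_mrg S).aemeasurable).mp ?_
  · rw [map_mrg hprod S]; exact hfi.aestronglyMeasurable
  · rwa [map_mrg hprod S]

lemma integral_avg (hprod : IsProd μi μ) (S : Set ℕ) {f : (∀ i, Ω i) → ℝ}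
    (hfi : Integrable f μ) :
    ∫ τ, avg μ S f τ ∂μ = ∫ ω, f ω ∂μ := by
  have hsm : AEStronglyMeasurable f
      (Measure.map (fun p : (∀ i, Ω i) × (∀ i, Ω i) => mrg S p.1 p.2) (μ.prod μ)) := by
    rw [map_mrg hprod S]; exact hfi.aestronglyMeasurable
  have h1 : ∫ ω, f ω ∂μ
      = ∫ p, f (mrg S p.1 p.2) ∂(μ.prod μ) := by
    conv_lhs => rw [← map_mrg hprod S]
    exact integral_map (measurable_mrg S).aemeasurable hsm
  rw [h1, integral_prod_symm _ (integrable_mrg_comp hprod S hfi)]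
  rfl

lemma integrable_avg (hprod : IsProd μi μ) (S : Set ℕ) {f : (∀ i, Ω i) → ℝ}
    (hfi : Integrable f μ) :
    Integrable (avg μ S f) μ :=
  (integrable_mrg_comp hprod S hfi).integral_prod_right

lemma ae_integrable_slice (hprod : IsProd μi μ) (S : Set ℕ) {f : (∀ i, Ω i) → ℝ}
    (hfi : Integrable f μ) :
    ∀ᵐ τ ∂μ, Integrable (fun σ => f (mrg S σ τ)) μ :=
  (integrable_mrg_comp hprod S hfi).prod_left_ae

lemma lintegral_avg (hprod : IsProd μi μ) (S : Set ℕ) {g : (∀ i, Ω i) → ℝ≥0∞}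
    (hg : Measurable g) :
    ∫⁻ τ, ∫⁻ σ, g (mrg S σ τ) ∂μ ∂μ = ∫⁻ ω, g ω ∂μ := by
  have h1 : ∫⁻ ω, g ω ∂μ = ∫⁻ p, g (mrg S p.1 p.2) ∂(μ.prod μ) := by
    conv_lhs => rw [← map_mrg hprod S]
    exact lintegral_map hg (measurable_mrg S)
  rw [h1]
  exact (lintegral_prod_symm' (fun p : (∀ i, Ω i) × (∀ i, Ω i) => g (mrg S p.1 p.2))
    (hg.comp (measurable_mrg S))).symm

lemma avg_singleton (hprod : IsProd μi μ) (i : ℕ) {f : (∀ i, Ω i) → ℝ}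
    (hf : Measurable f) (τ : ∀ i, Ω i) :
    avg μ {i} f τ = ∫ y, f (Function.update τ i y) ∂(μi i) := by
  have h1 : avg μ {i} f τ = ∫ σ, f (Function.update τ i (σ i)) ∂μ := by
    unfold avg; congr 1; funext σ; rw [mrg_singleton]
  rw [h1]
  conv_rhs => rw [← map_eval hprod i]
  exact (integral_map (measurable_pi_apply i).aemeasurable
    (hf.comp (measurable_update τ)).aestronglyMeasurable).symm

lemma map_mrg_swap (hprod : IsProd μi μ) (T : Set ℕ) :
    Measure.map (fun p : (∀ i, Ω i) × (∀ i, Ω i) => mrg T p.2 p.1) (μ.prod μ) = μ := by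
  have hc : (fun p : (∀ i, Ω i) × (∀ i, Ω i) => mrg T p.2 p.1)
      = (fun p : (∀ i, Ω i) × (∀ i, Ω i) => mrg T p.1 p.2) ∘ Prod.swap := rfl
  rw [hc, ← Measure.map_map (measurable_mrg T) measurable_swap, Measure.prod_swap,
    map_mrg hprod T]

lemma avg_avg (hprod : IsProd μi μ) (S T : Set ℕ) {f : (∀ i, Ω i) → ℝ}
    (hf : Measurable f) (hfi : Integrable f μ) :
    avg μ S (avg μ T f) =ᵐ[μ] avg μ (S ∪ T) f := by
  have hm2 := map_mrg_swap hprod (μ := μ) T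
  filter_upwards [ae_integrable_slice hprod (S ∪ T) hfi] with τ hτ
  have h1 : avg μ S (avg μ T f) τ
      = ∫ σ, ∫ σ', f (mrg (S ∪ T) (mrg T σ' σ) τ) ∂μ ∂μ := by
    have he : ∀ σ, avg μ T f (mrg S σ τ) = ∫ σ', f (mrg (S ∪ T) (mrg T σ' σ) τ) ∂μ := by
      intro σ; unfold avg; congr 1; funext σ'; rw [mrg_mrg]
    show (∫ σ, avg μ T f (mrg S σ τ) ∂μ) = _
    simp only [he]
  have hmsw : Measurable fun p : (∀ i, Ω i) × (∀ i, Ω i) => mrg T p.2 p.1 :=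
    (measurable_mrg T).comp measurable_swap
  have h2 : Integrable (fun p : (∀ i, Ω i) × (∀ i, Ω i) => f (mrg (S ∪ T) (mrg T p.2 p.1) τ))
      (μ.prod μ) := by
    have hc : (fun p : (∀ i, Ω i) × (∀ i, Ω i) => f (mrg (S ∪ T) (mrg T p.2 p.1) τ))
        = (fun ρ => f (mrg (S ∪ T) ρ τ)) ∘ (fun p : (∀ i, Ω i) × (∀ i, Ω i) => mrg T p.2 p.1) :=
      rfl
    rw [hc]
    refine (integrable_map_measure ?_ hmsw.aemeasurable).mp ?_
    · rw [hm2]; exact hτ.aestronglyMeasurable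
    · rwa [hm2]
  rw [h1, ← integral_prod _ h2]
  have h3 : ∫ p, f (mrg (S ∪ T) (mrg T p.2 p.1) τ) ∂(μ.prod μ)
      = ∫ ρ, f (mrg (S ∪ T) ρ τ) ∂μ := by
    have hmap : ∫ ρ, f (mrg (S ∪ T) ρ τ)
          ∂(Measure.map (fun p : (∀ i, Ω i) × (∀ i, Ω i) => mrg T p.2 p.1) (μ.prod μ))
        = ∫ p, f (mrg (S ∪ T) (mrg T p.2 p.1) τ) ∂(μ.prod μ) :=
      integral_map hmsw.aemeasurable
        (by rw [hm2]; exact (hf.comp (measurable_mrg_left (S ∪ T) τ)).aestronglyMeasurable)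
    rw [hm2] at hmap
    exact hmap.symm
  rw [h3]; rfl

end Avg

section CVX

variable {α β : Type*} [MeasurableSpace α] [MeasurableSpace β]

lemma entNN_of_integrable {κ : Measure α} {Y : α → ℝ}
    (h : Integrable (fun y => Y y * Real.log (Y y)) κ) :
    entNN κ Y = ENNReal.ofReal (∫ y, Y y * Real.log (Y y) ∂κ
      - (∫ y, Y y ∂κ) * Real.log (∫ y, Y y ∂κ)) := if_pos h

lemma entNN_of_not_integrable {κ : Measure α} {Y : α → ℝ}
    (h : ¬ Integrable (fun y => Y y * Real.log (Y y)) κ) : entNN κ Y = ∞ := if_neg h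

/-- Convexity of entropy: the entropy of a mixture is at most the mixture of entropies. -/
lemma cvx (κ : Measure α) [IsProbabilityMeasure κ] (ρ : Measure β) [IsProbabilityMeasure ρ]
    {G : β → α → ℝ} (hGmeas : Measurable (Function.uncurry G))
    (hGnn : ∀ z y, 0 ≤ G z y)
    {g : α → ℝ} (hgdef : ∀ y, g y = ∫ z, G z y ∂ρ)
    (hgi : Integrable g κ)
    (hφg : Integrable (fun y => g y * Real.log (g y)) κ)
    (hsec : ∀ᵐ y ∂κ, Integrable (fun z => G z y) ρ) :
    ENNReal.ofReal ((∫ y, g y * Real.log (g y) ∂κ)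
        - (∫ y, g y ∂κ) * Real.log (∫ y, g y ∂κ))
      ≤ ∫⁻ z, entNN κ (G z) ∂ρ := by
  have hgm : Measurable g := by
    have h1 : g = fun y => ∫ z, G z y ∂ρ := funext hgdef
    rw [h1]
    exact hGmeas.stronglyMeasurable.integral_prod_left'.measurable
  have hgnn : ∀ y, 0 ≤ g y := fun y => (hgdef y) ▸ integral_nonneg fun z => hGnn z y
  have hphiGm : Measurable fun p : β × α => G p.1 p.2 * Real.log (G p.1 p.2) :=
    hGmeas.mul (Real.measurable_log.comp hGmeas)
  have hsmeas : MeasurableSet {z | Integrable (fun y => G z y * Real.log (G z y)) κ} :=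
    measurableSet_integrable (f := fun z y => G z y * Real.log (G z y))
      hphiGm.stronglyMeasurable
  by_cases hns : ρ {z | Integrable (fun y => G z y * Real.log (G z y)) κ}ᶜ = 0
  swap
  · -- the right-hand side is infinite
    have h1 : ∫⁻ z in {z | Integrable (fun y => G z y * Real.log (G z y)) κ}ᶜ,
        entNN κ (G z) ∂ρ = ⊤ := by
      rw [setLIntegral_congr_fun hsmeas.compl
        (fun z hz => entNN_of_not_integrable hz),
        setLIntegral_const, ENNReal.top_mul hns]
    calc ENNReal.ofReal ((∫ y, g y * Real.log (g y) ∂κ)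
        - (∫ y, g y ∂κ) * Real.log (∫ y, g y ∂κ)) ≤ ⊤ := le_top
      _ = ∫⁻ z in {z | Integrable (fun y => G z y * Real.log (G z y)) κ}ᶜ,
          entNN κ (G z) ∂ρ := h1.symm
      _ ≤ ∫⁻ z, entNN κ (G z) ∂ρ := setLIntegral_le_lintegral _ _
  have hzint : ∀ᵐ z ∂ρ, Integrable (fun y => G z y * Real.log (G z y)) κ := by
    rw [ae_iff]
    simpa [Set.compl_setOf] using hns
  -- joint integrability of G
  have hGj : Integrable (Function.uncurry G) (ρ.prod κ) := by
    refine ⟨hGmeas.aestronglyMeasurable, ?_⟩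
    rw [hasFiniteIntegral_iff_norm]
    have hmm : Measurable fun p : β × α => ENNReal.ofReal (G p.1 p.2) :=
      ENNReal.measurable_ofReal.comp hGmeas
    calc ∫⁻ p, ENNReal.ofReal ‖Function.uncurry G p‖ ∂(ρ.prod κ)
        = ∫⁻ p : β × α, ENNReal.ofReal (G p.1 p.2) ∂(ρ.prod κ) :=
          lintegral_congr fun p => by
            show ENNReal.ofReal ‖G p.1 p.2‖ = ENNReal.ofReal (G p.1 p.2)
            rw [Real.norm_eq_abs, abs_of_nonneg (hGnn _ _)]
      _ = ∫⁻ y, ∫⁻ z, ENNReal.ofReal (G z y) ∂ρ ∂κ := lintegral_prod_symm' _ hmm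
      _ = ∫⁻ y, ENNReal.ofReal (g y) ∂κ := by
          refine lintegral_congr_ae (hsec.mono fun y hy => ?_)
          show ∫⁻ z, ENNReal.ofReal (G z y) ∂ρ = ENNReal.ofReal (g y)
          rw [hgdef y]
          exact (ofReal_integral_eq_lintegral_ofReal hy
            (Filter.Eventually.of_forall fun z => hGnn z y)).symm
      _ = ENNReal.ofReal (∫ y, g y ∂κ) :=
          (ofReal_integral_eq_lintegral_ofReal hgi (Filter.Eventually.of_forall hgnn)).symm
      _ < ⊤ := ENNReal.ofReal_lt_top
  have hGzi : ∀ᵐ z ∂ρ, Integrable (G z) κ := hGj.prod_right_ae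
  have hEG_int : Integrable (fun z => ∫ y, G z y ∂κ) ρ := hGj.integral_prod_left
  have hEg_swap : ∫ y, g y ∂κ = ∫ z, ∫ y, G z y ∂κ ∂ρ := by
    have h1 : ∫ y, g y ∂κ = ∫ y, ∫ z, G z y ∂ρ ∂κ :=
      integral_congr_ae (Filter.Eventually.of_forall hgdef)
    rw [h1]
    exact integral_integral_swap hGj.swap
  -- integrability of the joint function (z, y) ↦ G z y * log (g y)
  have hglogi : Integrable (fun y => g y * |Real.log (g y)|) κ := by
    refine hφg.abs.congr (Filter.Eventually.of_forall fun y => ?_)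
    show |g y * Real.log (g y)| = g y * |Real.log (g y)|
    rw [abs_mul, abs_of_nonneg (hgnn y)]
  have hjoint2 : Integrable (fun p : β × α => G p.1 p.2 * Real.log (g p.2)) (ρ.prod κ) := by
    refine ⟨(hGmeas.mul ((Real.measurable_log.comp hgm).comp measurable_snd)).aestronglyMeasurable,
      ?_⟩
    rw [hasFiniteIntegral_iff_norm]
    have hmm2 : Measurable fun p : β × α =>
        ENNReal.ofReal (G p.1 p.2) * ENNReal.ofReal |Real.log (g p.2)| :=
      (ENNReal.measurable_ofReal.comp hGmeas).mul
        (ENNReal.measurable_ofReal.comp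
          ((measurable_abs.comp (Real.measurable_log.comp hgm)).comp measurable_snd))
    calc ∫⁻ p, ENNReal.ofReal ‖G p.1 p.2 * Real.log (g p.2)‖ ∂(ρ.prod κ)
        = ∫⁻ p : β × α, ENNReal.ofReal (G p.1 p.2) * ENNReal.ofReal |Real.log (g p.2)|
            ∂(ρ.prod κ) := by
          refine lintegral_congr fun p => ?_
          show ENNReal.ofReal ‖G p.1 p.2 * Real.log (g p.2)‖ = _
          rw [Real.norm_eq_abs, abs_mul, abs_of_nonneg (hGnn _ _),
            ENNReal.ofReal_mul (hGnn _ _)]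
      _ = ∫⁻ y, ∫⁻ z, ENNReal.ofReal (G z y) * ENNReal.ofReal |Real.log (g y)| ∂ρ ∂κ :=
          lintegral_prod_symm' _ hmm2
      _ = ∫⁻ y, (∫⁻ z, ENNReal.ofReal (G z y) ∂ρ) * ENNReal.ofReal |Real.log (g y)| ∂κ := by
          refine lintegral_congr fun y => ?_
          exact lintegral_mul_const _
            (ENNReal.measurable_ofReal.comp
              (hGmeas.comp (measurable_id.prodMk measurable_const)))
      _ = ∫⁻ y, ENNReal.ofReal (g y) * ENNReal.ofReal |Real.log (g y)| ∂κ := by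
          refine lintegral_congr_ae (hsec.mono fun y hy => ?_)
          show (∫⁻ z, ENNReal.ofReal (G z y) ∂ρ) * ENNReal.ofReal |Real.log (g y)|
            = ENNReal.ofReal (g y) * ENNReal.ofReal |Real.log (g y)|
          congr 1
          rw [hgdef y]
          exact (ofReal_integral_eq_lintegral_ofReal hy
            (Filter.Eventually.of_forall fun z => hGnn z y)).symm
      _ = ∫⁻ y, ENNReal.ofReal (g y * |Real.log (g y)|) ∂κ := by
          refine lintegral_congr fun y => ?_
          show ENNReal.ofReal (g y) * ENNReal.ofReal |Real.log (g y)|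
            = ENNReal.ofReal (g y * |Real.log (g y)|)
          rw [ENNReal.ofReal_mul (hgnn y)]
      _ = ENNReal.ofReal (∫ y, g y * |Real.log (g y)| ∂κ) :=
          (ofReal_integral_eq_lintegral_ofReal hglogi
            (Filter.Eventually.of_forall fun y => mul_nonneg (hgnn y) (abs_nonneg _))).symm
      _ < ⊤ := ENNReal.ofReal_lt_top
  have hG_glog_slice : ∀ᵐ z ∂ρ, Integrable (fun y => G z y * Real.log (g y)) κ :=
    hjoint2.prod_right_ae
  -- Fubini for the main term
  have hFubiniA : ∫ y, g y * Real.log (g y) ∂κ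
      = ∫ z, ∫ y, G z y * Real.log (g y) ∂κ ∂ρ := by
    have h1 : ∀ y, g y * Real.log (g y) = ∫ z, G z y * Real.log (g y) ∂ρ := fun y => by
      rw [integral_mul_const, ← hgdef y]
    have h2 : ∫ y, g y * Real.log (g y) ∂κ = ∫ y, ∫ z, G z y * Real.log (g y) ∂ρ ∂κ :=
      integral_congr_ae (Filter.Eventually.of_forall h1)
    rw [h2]
    exact integral_integral_swap hjoint2.swap
  -- the slice entropies
  have hentnn : ∀ᵐ z ∂ρ, 0 ≤ (∫ y, G z y * Real.log (G z y) ∂κ)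
      - (∫ y, G z y ∂κ) * Real.log (∫ y, G z y ∂κ) := by
    filter_upwards [hGzi, hzint] with z h1 h2
    have := jensen_phi h1 (Filter.Eventually.of_forall fun y => hGnn z y) h2
    linarith
  have hRHS : ∫⁻ z, entNN κ (G z) ∂ρ
      = ∫⁻ z, ENNReal.ofReal ((∫ y, G z y * Real.log (G z y) ∂κ)
          - (∫ y, G z y ∂κ) * Real.log (∫ y, G z y ∂κ)) ∂ρ :=
    lintegral_congr_ae (hzint.mono fun z hz => entNN_of_integrable hz)
  by_cases hfin : ∫⁻ z, ENNReal.ofReal ((∫ y, G z y * Real.log (G z y) ∂κ)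
      - (∫ y, G z y ∂κ) * Real.log (∫ y, G z y ∂κ)) ∂ρ = ⊤
  · rw [hRHS, hfin]; exact le_top
  have hentm : Measurable fun z => (∫ y, G z y * Real.log (G z y) ∂κ)
      - (∫ y, G z y ∂κ) * Real.log (∫ y, G z y ∂κ) := by
    have m1 : Measurable fun z => ∫ y, G z y * Real.log (G z y) ∂κ :=
      hphiGm.stronglyMeasurable.integral_prod_right'.measurable
    have m2 : Measurable fun z => ∫ y, G z y ∂κ :=
      hGmeas.stronglyMeasurable.integral_prod_right'.measurable
    exact m1.sub (m2.mul (Real.measurable_log.comp m2))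
  have hent_int : Integrable (fun z => (∫ y, G z y * Real.log (G z y) ∂κ)
      - (∫ y, G z y ∂κ) * Real.log (∫ y, G z y ∂κ)) ρ := by
    refine ⟨hentm.aestronglyMeasurable, ?_⟩
    rw [hasFiniteIntegral_iff_norm]
    have h1 : ∫⁻ z, ENNReal.ofReal ‖(∫ y, G z y * Real.log (G z y) ∂κ)
        - (∫ y, G z y ∂κ) * Real.log (∫ y, G z y ∂κ)‖ ∂ρ
        = ∫⁻ z, ENNReal.ofReal ((∫ y, G z y * Real.log (G z y) ∂κ)
          - (∫ y, G z y ∂κ) * Real.log (∫ y, G z y ∂κ)) ∂ρ := by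
      refine lintegral_congr_ae (hentnn.mono fun z hz => ?_)
      show ENNReal.ofReal ‖(∫ y, G z y * Real.log (G z y) ∂κ)
        - (∫ y, G z y ∂κ) * Real.log (∫ y, G z y ∂κ)‖ = _
      rw [Real.norm_eq_abs, abs_of_nonneg hz]
    rw [h1]
    exact lt_top_iff_ne_top.2 hfin
  have hRHS2 : ∫⁻ z, ENNReal.ofReal ((∫ y, G z y * Real.log (G z y) ∂κ)
      - (∫ y, G z y ∂κ) * Real.log (∫ y, G z y ∂κ)) ∂ρ
      = ENNReal.ofReal (∫ z, ((∫ y, G z y * Real.log (G z y) ∂κ)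
        - (∫ y, G z y ∂κ) * Real.log (∫ y, G z y ∂κ)) ∂ρ) :=
    (ofReal_integral_eq_lintegral_ofReal hent_int hentnn).symm
  rw [hRHS, hRHS2]
  apply ENNReal.ofReal_le_ofReal
  -- now a purely real inequality
  by_cases hEg0 : (∫ y, g y ∂κ) = 0
  · have hg0 : g =ᵐ[κ] 0 :=
      (integral_eq_zero_iff_of_nonneg_ae (Filter.Eventually.of_forall hgnn) hgi).mp hEg0
    have h2 : ∫ y, g y * Real.log (g y) ∂κ = 0 := by
      have : (fun y => g y * Real.log (g y)) =ᵐ[κ] 0 := hg0.mono fun y hy => by simp [hy]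
      rw [integral_congr_ae this]; simp
    rw [h2, hEg0]
    simpa using integral_nonneg_of_ae hentnn
  have hEgpos : 0 < ∫ y, g y ∂κ :=
    lt_of_le_of_ne (integral_nonneg hgnn) (Ne.symm hEg0)
  have hq_int1 : Integrable (fun z => ∫ y, G z y * Real.log (g y) ∂κ) ρ :=
    hjoint2.integral_prod_left
  have hLHS : (∫ y, g y * Real.log (g y) ∂κ) - (∫ y, g y ∂κ) * Real.log (∫ y, g y ∂κ)
      = ∫ z, ((∫ y, G z y * Real.log (g y) ∂κ)
        - (∫ y, G z y ∂κ) * Real.log (∫ y, g y ∂κ)) ∂ρ := by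
    rw [integral_sub hq_int1 (hEG_int.mul_const _), ← hFubiniA, integral_mul_const,
      ← hEg_swap]
  rw [hLHS]
  -- the support condition
  have hB : (ρ.prod κ) {p : β × α | g p.2 = 0 ∧ G p.1 p.2 ≠ 0} = 0 := by
    have hBm : MeasurableSet {p : β × α | g p.2 = 0 ∧ G p.1 p.2 ≠ 0} := by
      refine MeasurableSet.inter ?_ ?_
      · exact (hgm.comp measurable_snd) (measurableSet_singleton 0)
      · exact hGmeas (measurableSet_singleton 0).compl
    rw [Measure.prod_apply_symm hBm]
    have hz0 : ∀ᵐ y ∂κ, ρ ((fun z => (z, y)) ⁻¹' {p : β × α | g p.2 = 0 ∧ G p.1 p.2 ≠ 0})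
        = 0 := by
      filter_upwards [hsec] with y hy
      by_cases hgy : g y = 0
      · have hGz0 : (fun z => G z y) =ᵐ[ρ] 0 :=
          (integral_eq_zero_iff_of_nonneg_ae
            (Filter.Eventually.of_forall fun z => hGnn z y) hy).mp
            (by rw [← hgdef y]; exact hgy)
        refine measure_mono_null (fun z hz => hz.2) ?_
        exact ae_iff.mp hGz0
      · have he : (fun z => (z, y)) ⁻¹' {p : β × α | g p.2 = 0 ∧ G p.1 p.2 ≠ 0} = ∅ := by
          ext z; simp [hgy]
        rw [he]; exact measure_empty
    rw [lintegral_congr_ae hz0, lintegral_zero]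
  have hsupp : ∀ᵐ z ∂ρ, ∀ᵐ y ∂κ, (g y = 0 → G z y = 0) := by
    have h0 : ∀ᵐ p ∂(ρ.prod κ), g p.2 = 0 → G p.1 p.2 = 0 := by
      rw [ae_iff]
      have he : {p : β × α | ¬ (g p.2 = 0 → G p.1 p.2 = 0)}
          = {p : β × α | g p.2 = 0 ∧ G p.1 p.2 ≠ 0} := by
        ext p; simp [Classical.not_imp]
      rw [he]; exact hB
    exact Measure.ae_ae_of_ae_prod h0
  refine integral_mono_ae (hq_int1.sub (hEG_int.mul_const _)) hent_int ?_
  filter_upwards [hGzi, hzint, hG_glog_slice, hsupp] with z hGzint hφGz hGlogg hzsupp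
  by_cases hEGz : (∫ y, G z y ∂κ) = 0
  · have hGz0 : (fun y => G z y) =ᵐ[κ] 0 :=
      (integral_eq_zero_iff_of_nonneg_ae
        (Filter.Eventually.of_forall (hGnn z)) hGzint).mp hEGz
    have e1 : ∫ y, G z y * Real.log (g y) ∂κ = 0 := by
      have : (fun y => G z y * Real.log (g y)) =ᵐ[κ] 0 := hGz0.mono fun y hy => by simp [hy]
      rw [integral_congr_ae this]; simp
    have e2 : ∫ y, G z y * Real.log (G z y) ∂κ = 0 := by
      have : (fun y => G z y * Real.log (G z y)) =ᵐ[κ] 0 := hGz0.mono fun y hy => by simp [hy]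
      rw [integral_congr_ae this]; simp
    simp [e1, e2, hEGz]
  have hEGzpos : 0 < ∫ y, G z y ∂κ :=
    lt_of_le_of_ne (integral_nonneg (hGnn z)) (Ne.symm hEGz)
  set c : ℝ := (∫ y, G z y ∂κ) / (∫ y, g y ∂κ) with hc
  have hcpos : 0 < c := div_pos hEGzpos hEgpos
  have hptwise : ∀ᵐ y ∂κ, G z y * Real.log (g y) - G z y * Real.log (G z y)
      ≤ (c * g y - G z y) - G z y * Real.log c := by
    filter_upwards [hzsupp] with y hy
    rcases eq_or_lt_of_le (hGnn z y) with ha | ha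
    · have hcg := mul_nonneg hcpos.le (hgnn y)
      rw [← ha]
      simp only [zero_mul, sub_zero, mul_zero]
      nlinarith [hcg]
    · have hgy : 0 < g y := by
        rcases eq_or_lt_of_le (hgnn y) with hg0 | hg0
        · exact absurd (hy hg0.symm) (ne_of_gt ha)
        · exact hg0
      have hkey : Real.log (c * g y / G z y) ≤ c * g y / G z y - 1 :=
        Real.log_le_sub_one_of_pos (by positivity)
      have hlogsplit : Real.log (c * g y / G z y)
          = Real.log c + Real.log (g y) - Real.log (G z y) := by
        rw [Real.log_div (by positivity) (ne_of_gt ha),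
          Real.log_mul (ne_of_gt hcpos) (ne_of_gt hgy)]
      have h2 : G z y * Real.log (c * g y / G z y) ≤ c * g y - G z y := by
        calc G z y * Real.log (c * g y / G z y) ≤ G z y * (c * g y / G z y - 1) :=
              mul_le_mul_of_nonneg_left hkey ha.le
          _ = c * g y - G z y := by field_simp
      rw [hlogsplit] at h2
      nlinarith [h2]
  have hli : Integrable (fun y => G z y * Real.log (g y) - G z y * Real.log (G z y)) κ :=
    hGlogg.sub hφGz
  have hri : Integrable (fun y => (c * g y - G z y) - G z y * Real.log c) κ :=
    ((hgi.const_mul c).sub hGzint).sub (hGzint.mul_const _)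
  have hint_le : ∫ y, (G z y * Real.log (g y) - G z y * Real.log (G z y)) ∂κ
      ≤ ∫ y, ((c * g y - G z y) - G z y * Real.log c) ∂κ :=
    integral_mono_ae hli hri hptwise
  have hL : ∫ y, (G z y * Real.log (g y) - G z y * Real.log (G z y)) ∂κ
      = (∫ y, G z y * Real.log (g y) ∂κ) - ∫ y, G z y * Real.log (G z y) ∂κ :=
    integral_sub hGlogg hφGz
  have hR : ∫ y, ((c * g y - G z y) - G z y * Real.log c) ∂κ
      = - ((∫ y, G z y ∂κ) * Real.log c) := by
    have e0 : ∫ y, ((c * g y - G z y) - G z y * Real.log c) ∂κ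
        = (∫ y, (c * g y - G z y) ∂κ) - ∫ y, G z y * Real.log c ∂κ :=
      integral_sub ((hgi.const_mul c).sub hGzint) (hGzint.mul_const _)
    have e1 : ∫ y, (c * g y - G z y) ∂κ = (∫ y, c * g y ∂κ) - ∫ y, G z y ∂κ :=
      integral_sub (hgi.const_mul c) hGzint
    have e1b : ∫ y, c * g y ∂κ = c * ∫ y, g y ∂κ := integral_const_mul c g
    have e2 : ∫ y, G z y * Real.log c ∂κ = (∫ y, G z y ∂κ) * Real.log c :=
      integral_mul_const _ _
    have hce : c * ∫ y, g y ∂κ = ∫ y, G z y ∂κ := by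
      rw [hc]; field_simp
    rw [e0, e1, e1b, e2, hce]; ring
  rw [hL, hR] at hint_le
  have hlogc : Real.log c = Real.log (∫ y, G z y ∂κ) - Real.log (∫ y, g y ∂κ) :=
    Real.log_div hEGz (ne_of_gt hEgpos)
  rw [hlogc] at hint_le
  nlinarith [hint_le]

end CVX

section Step

variable {μi : ∀ i, Measure (Ω i)} [∀ i, IsProbabilityMeasure (μi i)]
  {μ : Measure (∀ i, Ω i)} [IsProbabilityMeasure μ]

lemma integrable_phi_avg (hprod : IsProd μi μ) (S : Set ℕ) {f : (∀ i, Ω i) → ℝ}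
    (hf : Measurable f) (hnn : ∀ ω, 0 ≤ f ω) (hfi : Integrable f μ)
    (hφ : Integrable (fun ω => f ω * Real.log (f ω)) μ) :
    Integrable (fun τ => avg μ S f τ * Real.log (avg μ S f τ)) μ := by
  have hh : Integrable (avg μ S (fun ω => f ω * Real.log (f ω))) μ := integrable_avg hprod S hφ
  have hub : ∀ᵐ τ ∂μ, avg μ S f τ * Real.log (avg μ S f τ)
      ≤ avg μ S (fun ω => f ω * Real.log (f ω)) τ := by
    filter_upwards [ae_integrable_slice hprod S hfi, ae_integrable_slice hprod S hφ]
      with τ h1 h2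
    exact jensen_phi h1 (Filter.Eventually.of_forall fun σ => hnn _) h2
  have hlb : ∀ τ, -(Real.exp 1)⁻¹ ≤ avg μ S f τ * Real.log (avg μ S f τ) :=
    fun τ => phi_lb (avg_nonneg S hnn τ)
  have hm : Measurable fun τ => avg μ S f τ * Real.log (avg μ S f τ) :=
    (measurable_avg S hf).mul (Real.measurable_log.comp (measurable_avg S hf))
  refine Integrable.mono' (hh.abs.add (integrable_const (Real.exp 1)⁻¹))
    hm.aestronglyMeasurable ?_
  filter_upwards [hub] with τ h1
  have e1 := hlb τ
  have e2 := le_abs_self (avg μ S (fun ω => f ω * Real.log (f ω)) τ)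
  have e3 : (0:ℝ) < (Real.exp 1)⁻¹ := by positivity
  have e4 := abs_nonneg (avg μ S (fun ω => f ω * Real.log (f ω)) τ)
  rw [Real.norm_eq_abs, abs_le]
  constructor <;> simp only [Pi.add_apply] <;> [linarith; linarith]

lemma measurable_entNN_update (i : ℕ) {X : (∀ i, Ω i) → ℝ} (hX : Measurable X) :
    Measurable fun ω => entNN (μi i) (fun y => X (Function.update ω i y)) := by
  classical
  have hj : Measurable fun p : (∀ j, Ω j) × Ω i => X (Function.update p.1 i p.2) :=
    hX.comp measurable_update'
  have hjφ : Measurable fun p : (∀ j, Ω j) × Ω i =>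
      X (Function.update p.1 i p.2) * Real.log (X (Function.update p.1 i p.2)) :=
    hj.mul (Real.measurable_log.comp hj)
  have hs : MeasurableSet {ω : ∀ j, Ω j | Integrable
      (fun y => X (Function.update ω i y) * Real.log (X (Function.update ω i y))) (μi i)} :=
    measurableSet_integrable
      (f := fun ω y => X (Function.update ω i y) * Real.log (X (Function.update ω i y)))
      hjφ.stronglyMeasurable
  have m1 : Measurable fun ω : ∀ j, Ω j =>
      ∫ y, X (Function.update ω i y) * Real.log (X (Function.update ω i y)) ∂(μi i) :=
    hjφ.stronglyMeasurable.integral_prod_right'.measurable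
  have m2 : Measurable fun ω : ∀ j, Ω j => ∫ y, X (Function.update ω i y) ∂(μi i) :=
    hj.stronglyMeasurable.integral_prod_right'.measurable
  have hfun : (fun ω => entNN (μi i) (fun y => X (Function.update ω i y)))
      = Set.piecewise {ω : ∀ j, Ω j | Integrable
          (fun y => X (Function.update ω i y) * Real.log (X (Function.update ω i y))) (μi i)}
          (fun ω => ENNReal.ofReal
            ((∫ y, X (Function.update ω i y) * Real.log (X (Function.update ω i y)) ∂(μi i))
              - (∫ y, X (Function.update ω i y) ∂(μi i))
                * Real.log (∫ y, X (Function.update ω i y) ∂(μi i))))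
          (fun _ => ⊤) := by
    funext ω
    by_cases h : Integrable
        (fun y => X (Function.update ω i y) * Real.log (X (Function.update ω i y))) (μi i)
    · refine (entNN_of_integrable h).trans ?_
      exact (Set.piecewise_eq_of_mem {ω : ∀ j, Ω j | Integrable
        (fun y => X (Function.update ω i y) * Real.log (X (Function.update ω i y))) (μi i)}
        (fun ω => ENNReal.ofReal
          ((∫ y, X (Function.update ω i y) * Real.log (X (Function.update ω i y)) ∂(μi i))
            - (∫ y, X (Function.update ω i y) ∂(μi i))
              * Real.log (∫ y, X (Function.update ω i y) ∂(μi i))))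
        (fun _ => ⊤) h).symm
    · refine (entNN_of_not_integrable h).trans ?_
      exact (Set.piecewise_eq_of_notMem {ω : ∀ j, Ω j | Integrable
        (fun y => X (Function.update ω i y) * Real.log (X (Function.update ω i y))) (μi i)}
        (fun ω => ENNReal.ofReal
          ((∫ y, X (Function.update ω i y) * Real.log (X (Function.update ω i y)) ∂(μi i))
            - (∫ y, X (Function.update ω i y) ∂(μi i))
              * Real.log (∫ y, X (Function.update ω i y) ∂(μi i))))
        (fun _ => ⊤) h).symm
  rw [hfun]
  exact Measurable.piecewise hs
    (ENNReal.measurable_ofReal.comp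
      (m1.sub (m2.mul (Real.measurable_log.comp m2)))) measurable_const

lemma integrable_update_slice (hprod : IsProd μi μ) (i : ℕ) {f : (∀ i, Ω i) → ℝ}
    (hf : Measurable f) {τ : ∀ j, Ω j}
    (h : Integrable (fun σ => f (mrg {i} σ τ)) μ) :
    Integrable (fun y => f (Function.update τ i y)) (μi i) := by
  have h2 : Integrable ((fun y => f (Function.update τ i y)) ∘ (fun σ : ∀ j, Ω j => σ i)) μ :=
    h.congr (Filter.Eventually.of_forall fun σ => by
      show f (mrg {i} σ τ) = f (Function.update τ i (σ i))
      rw [mrg_singleton])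
  rw [← map_eval hprod i]
  exact (integrable_map_measure (hf.comp (measurable_update τ)).aestronglyMeasurable
    (measurable_pi_apply i).aemeasurable).mpr h2

/-- The key one-coordinate step: the entropy decrease from averaging over coordinate `i`
is bounded by the expected conditional entropy in coordinate `i`. -/
lemma step (hprod : IsProd μi μ) {S : Set ℕ} {i : ℕ} (hiS : i ∉ S)
    {X : (∀ i, Ω i) → ℝ} (hX : Measurable X) (hnn : ∀ ω, 0 ≤ X ω)
    (hXi : Integrable X μ) (hXφ : Integrable (fun ω => X ω * Real.log (X ω)) μ) :
    ENNReal.ofReal ((∫ τ, avg μ S X τ * Real.log (avg μ S X τ) ∂μ)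
        - ∫ τ, avg μ (insert i S) X τ * Real.log (avg μ (insert i S) X τ) ∂μ)
      ≤ ∫⁻ ω, entNN (μi i) (fun y => X (Function.update ω i y)) ∂μ := by
  classical
  have hDmeas : Measurable (avg μ S X) := measurable_avg S hX
  have hDnn : ∀ τ, 0 ≤ avg μ S X τ := avg_nonneg S hnn
  have hDi : Integrable (avg μ S X) μ := integrable_avg hprod S hXi
  have hDφ : Integrable (fun τ => avg μ S X τ * Real.log (avg μ S X τ)) μ :=
    integrable_phi_avg hprod S hX hnn hXi hXφ
  have hD'φ : Integrable
      (fun τ => avg μ (insert i S) X τ * Real.log (avg μ (insert i S) X τ)) μ :=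
    integrable_phi_avg hprod (insert i S) hX hnn hXi hXφ
  have hφD_m : Measurable fun τ => avg μ S X τ * Real.log (avg μ S X τ) :=
    hDmeas.mul (Real.measurable_log.comp hDmeas)
  have hEmeas : Measurable fun ω => entNN (μi i) (fun y => X (Function.update ω i y)) :=
    measurable_entNN_update i hX
  have hD'K : avg μ (insert i S) X =ᵐ[μ] avg μ {i} (avg μ S X) := by
    rw [Set.insert_eq]
    exact (avg_avg hprod {i} S hX hXi).symm
  have hφD'K : ∫ τ, avg μ (insert i S) X τ * Real.log (avg μ (insert i S) X τ) ∂μ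
      = ∫ τ, avg μ {i} (avg μ S X) τ * Real.log (avg μ {i} (avg μ S X) τ) ∂μ :=
    integral_congr_ae (hD'K.mono fun τ h => by
      show avg μ (insert i S) X τ * Real.log (avg μ (insert i S) X τ) = _
      rw [h])
  have hφD : ∫ τ, avg μ S X τ * Real.log (avg μ S X τ) ∂μ
      = ∫ τ, avg μ {i} (fun ω => avg μ S X ω * Real.log (avg μ S X ω)) τ ∂μ :=
    (integral_avg hprod {i} hDφ).symm
  have hint1 : Integrable (avg μ {i} (fun ω => avg μ S X ω * Real.log (avg μ S X ω))) μ :=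
    integrable_avg hprod {i} hDφ
  have hint2 : Integrable
      (fun τ => avg μ {i} (avg μ S X) τ * Real.log (avg μ {i} (avg μ S X) τ)) μ :=
    hD'φ.congr (hD'K.mono fun τ h => by
      show avg μ (insert i S) X τ * Real.log (avg μ (insert i S) X τ) = _
      rw [h])
  rw [hφD, hφD'K, ← integral_sub hint1 hint2]
  -- the a.e. pointwise bound coming from convexity of entropy
  have hkey : ∀ᵐ τ ∂μ, ∀ᵐ y ∂(μi i),
      Function.update τ i y ∉ toMeasurable μ {ω | ¬ Integrable (fun z => X (mrg S z ω)) μ} := by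
    set N := toMeasurable μ {ω | ¬ Integrable (fun z => X (mrg S z ω)) μ} with hNdef
    have hNmeas : MeasurableSet N := measurableSet_toMeasurable _ _
    have hNnull : μ N = 0 := by
      rw [hNdef, measure_toMeasurable]
      exact ae_iff.mp (ae_integrable_slice hprod S hXi)
    have h0 : ∫⁻ τ, ∫⁻ σ, N.indicator (1 : (∀ j, Ω j) → ℝ≥0∞) (mrg {i} σ τ) ∂μ ∂μ = 0 := by
      rw [lintegral_avg hprod {i} (measurable_one.indicator hNmeas),
        lintegral_indicator_one hNmeas, hNnull]
    have hm0 : Measurable fun τ => ∫⁻ σ, N.indicator (1 : (∀ j, Ω j) → ℝ≥0∞) (mrg {i} σ τ) ∂μ :=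
      Measurable.lintegral_prod_left'
        ((measurable_one.indicator hNmeas).comp (measurable_mrg {i}))
    have h1 : ∀ᵐ τ ∂μ, ∫⁻ σ, N.indicator (1 : (∀ j, Ω j) → ℝ≥0∞) (mrg {i} σ τ) ∂μ = 0 :=
      (lintegral_eq_zero_iff hm0).mp h0
    filter_upwards [h1] with τ hτ
    have hpre : (fun σ : ∀ j, Ω j => N.indicator (1 : (∀ j, Ω j) → ℝ≥0∞) (mrg {i} σ τ))
        = ((fun σ : ∀ j, Ω j => mrg {i} σ τ) ⁻¹' N).indicator (1 : (∀ j, Ω j) → ℝ≥0∞) := by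
      funext σ
      simp only [Set.indicator_apply, Set.mem_preimage, Pi.one_apply]
    rw [hpre, lintegral_indicator_one ((measurable_mrg_left {i} τ) hNmeas)] at hτ
    have h3 : μi i {y | Function.update τ i y ∈ N} = 0 := by
      rw [← map_eval hprod i,
        Measure.map_apply (measurable_pi_apply i)
          (show MeasurableSet {y : Ω i | Function.update τ i y ∈ N} from
            (measurable_update τ) hNmeas)]
      have hset : (fun σ : ∀ j, Ω j => σ i) ⁻¹' {y | Function.update τ i y ∈ N}
          = (fun σ : ∀ j, Ω j => mrg {i} σ τ) ⁻¹' N := by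
        ext σ
        simp only [Set.mem_preimage, Set.mem_setOf_eq]
        rw [mrg_singleton]
      rw [hset]
      exact hτ
    rw [ae_iff]
    simpa only [not_not] using h3
  have hae : ∀ᵐ τ ∂μ, ENNReal.ofReal
      (avg μ {i} (fun ω => avg μ S X ω * Real.log (avg μ S X ω)) τ
        - avg μ {i} (avg μ S X) τ * Real.log (avg μ {i} (avg μ S X) τ))
      ≤ ∫⁻ z, entNN (μi i) (fun y => X (Function.update (mrg S z τ) i y)) ∂μ := by
    filter_upwards [ae_integrable_slice hprod {i} hDi, ae_integrable_slice hprod {i} hDφ,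
      hkey] with τ h1 h2 h3
    have hg1 : Integrable (fun y => avg μ S X (Function.update τ i y)) (μi i) :=
      integrable_update_slice hprod i hDmeas h1
    have hg2 : Integrable (fun y => avg μ S X (Function.update τ i y)
        * Real.log (avg μ S X (Function.update τ i y))) (μi i) :=
      integrable_update_slice hprod i hφD_m h2
    have hGm : Measurable (Function.uncurry
        fun (z : ∀ j, Ω j) (y : Ω i) => X (Function.update (mrg S z τ) i y)) := by
      apply hX.comp
      exact measurable_update'.comp
        (((measurable_mrg_left S τ).comp measurable_fst).prodMk measurable_snd)
    have hgdef : ∀ y, avg μ S X (Function.update τ i y)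
        = ∫ z, X (Function.update (mrg S z τ) i y) ∂μ := by
      intro y
      show (∫ z, X (mrg S z (Function.update τ i y)) ∂μ) = _
      congr 1
      funext z
      rw [mrg_update hiS]
    have hsec : ∀ᵐ y ∂(μi i),
        Integrable (fun z => X (Function.update (mrg S z τ) i y)) μ := by
      filter_upwards [h3] with y hy
      have hP : Integrable (fun z => X (mrg S z (Function.update τ i y))) μ := by
        by_contra hc
        exact hy (subset_toMeasurable μ _ hc)
      refine hP.congr (Filter.Eventually.of_forall fun z => ?_)
      show X (mrg S z (Function.update τ i y)) = X (Function.update (mrg S z τ) i y)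
      rw [mrg_update hiS]
    have hcvx := cvx (μi i) μ hGm (fun z y => hnn _) hgdef hg1 hg2 hsec
    rw [avg_singleton hprod i hφD_m τ, avg_singleton hprod i hDmeas τ]
    exact hcvx
  calc ENNReal.ofReal (∫ τ, (avg μ {i} (fun ω => avg μ S X ω * Real.log (avg μ S X ω)) τ
        - avg μ {i} (avg μ S X) τ * Real.log (avg μ {i} (avg μ S X) τ)) ∂μ)
      ≤ ∫⁻ τ, ENNReal.ofReal
          (avg μ {i} (fun ω => avg μ S X ω * Real.log (avg μ S X ω)) τ
            - avg μ {i} (avg μ S X) τ * Real.log (avg μ {i} (avg μ S X) τ)) ∂μ :=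
        ofReal_integral_le (hint1.sub hint2)
    _ ≤ ∫⁻ τ, (∫⁻ z, entNN (μi i)
          (fun y => X (Function.update (mrg S z τ) i y)) ∂μ) ∂μ := lintegral_mono_ae hae
    _ = ∫⁻ ω, entNN (μi i) (fun y => X (Function.update ω i y)) ∂μ :=
        lintegral_avg hprod S hEmeas

end Step

section Levy

variable {μi : ∀ i, Measure (Ω i)} [∀ i, IsProbabilityMeasure (μi i)]
  {μ : Measure (∀ i, Ω i)} [IsProbabilityMeasure μ]

/-- Restriction to the first `n` coordinates. -/
def rfin (n : ℕ) : (∀ i, Ω i) → ∀ i : Fin n, Ω i := fun τ i => τ i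

lemma measurable_rfin (n : ℕ) : Measurable (rfin (Ω := Ω) n) :=
  measurable_pi_lambda _ fun _ => measurable_pi_apply _

/-- The filtration generated by the first `n` coordinates. -/
def filt : Filtration ℕ (MeasurableSpace.pi : MeasurableSpace (∀ i, Ω i)) where
  seq n := MeasurableSpace.comap (rfin (Ω := Ω) n) MeasurableSpace.pi
  mono' := by
    intro n m hnm
    show MeasurableSpace.comap (rfin (Ω := Ω) n) MeasurableSpace.pi
      ≤ MeasurableSpace.comap (rfin (Ω := Ω) m) MeasurableSpace.pi
    have hc : rfin (Ω := Ω) n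
        = (fun (v : ∀ i : Fin m, Ω i) (i : Fin n) => v (Fin.castLE hnm i)) ∘ rfin m := rfl
    rw [hc, ← MeasurableSpace.comap_comp]
    exact MeasurableSpace.comap_mono (measurable_iff_comap_le.mp
      (measurable_pi_lambda _ fun _ => measurable_pi_apply _))
  le' n := measurable_iff_comap_le.mp (measurable_rfin n)

lemma pi_le_iSup_filt :
    (MeasurableSpace.pi : MeasurableSpace (∀ i, Ω i)) ≤ ⨆ n, (filt (Ω := Ω)) n := by
  refine le_trans (le_of_eq MeasurableSpace.pi_eq_generateFrom_projections)
    (MeasurableSpace.generateFrom_le ?_)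
  rintro _ ⟨i, A, hA, rfl⟩
  have h1 : @Measurable _ _ ((filt (Ω := Ω)) (i + 1)) _ (fun τ : ∀ j, Ω j => τ i) := by
    have hc : (fun τ : ∀ j, Ω j => τ i)
        = (fun v : ∀ j : Fin (i + 1), Ω j => v ⟨i, Nat.lt_succ_self i⟩) ∘ rfin (i + 1) := rfl
    rw [hc]
    exact (measurable_pi_apply _).comp (measurable_iff_comap_le.mpr le_rfl)
  exact (le_iSup (fun n => ((filt (Ω := Ω)) n : MeasurableSpace (∀ i, Ω i))) (i + 1)) _ (h1 hA)

lemma Mn_eq_condexp (hprod : IsProd μi μ) {X : (∀ i, Ω i) → ℝ} (hX : Measurable X)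
    (hXi : Integrable X μ) (n : ℕ) :
    avg μ {j | n ≤ j} X =ᵐ[μ] μ[X | (filt (Ω := Ω)) n] := by
  classical
  have hne : ∀ i, Nonempty (Ω i) := by
    intro i
    by_contra h
    rw [not_nonempty_iff] at h
    have h1 : (μi i) Set.univ = 1 := measure_univ
    have h0 : (Set.univ : Set (Ω i)) = ∅ := Set.univ_eq_empty_iff.mpr h
    rw [h0, measure_empty] at h1
    exact one_ne_zero h1.symm
  haveI := hne
  set ω₀ : ∀ i, Ω i := fun i => Classical.arbitrary _ with hω₀
  have hMn_meas : Measurable (avg μ {j | n ≤ j} X) := measurable_avg _ hX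
  have hP : @Measurable _ _ ((filt (Ω := Ω)) n) _ (fun τ => mrg {j | n ≤ j} ω₀ τ) := by
    have hext : Measurable fun (v : ∀ k : Fin n, Ω k) (j : ℕ) =>
        if h : j < n then v ⟨j, h⟩ else ω₀ j := by
      apply measurable_pi_lambda
      intro j
      by_cases h : j < n
      · simp only [dif_pos h]; exact measurable_pi_apply _
      · simp only [dif_neg h]; exact measurable_const
    have hcomp : (fun τ => mrg {j | n ≤ j} ω₀ τ)
        = (fun (v : ∀ k : Fin n, Ω k) (j : ℕ) => if h : j < n then v ⟨j, h⟩ else ω₀ j)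
          ∘ rfin n := by
      funext τ
      funext j
      by_cases h : j < n
      · simp only [Function.comp_apply, dif_pos h]
        exact mrg_not_mem (fun hc => absurd hc (not_le.mpr h)) _ _
      · simp only [Function.comp_apply, dif_neg h]
        exact mrg_mem (not_lt.mp h) _ _
    rw [hcomp]
    exact hext.comp (measurable_iff_comap_le.mpr le_rfl)
  have hMP : avg μ {j | n ≤ j} X = (avg μ {j | n ≤ j} X) ∘ (fun τ => mrg {j | n ≤ j} ω₀ τ) := by
    funext τ
    show avg μ {j | n ≤ j} X τ = avg μ {j | n ≤ j} X (mrg {j | n ≤ j} ω₀ τ)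
    unfold avg
    congr 1
    funext σ
    rw [mrg_mrg_same]
  have hSM : StronglyMeasurable[(filt (Ω := Ω)) n] (avg μ {j | n ≤ j} X) := by
    rw [hMP]
    exact (hMn_meas.comp hP).stronglyMeasurable
  refine ae_eq_condExp_of_forall_setIntegral_eq ((filt (Ω := Ω)).le n) hXi
    (fun s _ _ => (integrable_avg hprod _ hXi).integrableOn) ?_ hSM.aestronglyMeasurable
  rintro s hs -
  obtain ⟨t, ht, rfl⟩ := hs
  have hpre : MeasurableSet (rfin (Ω := Ω) n ⁻¹' t) := (measurable_rfin n) ht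
  have hmem : ∀ τ σ, (mrg {j | n ≤ j} σ τ ∈ rfin (Ω := Ω) n ⁻¹' t ↔ τ ∈ rfin n ⁻¹' t) := by
    intro τ σ
    have he : rfin (Ω := Ω) n (mrg {j | n ≤ j} σ τ) = rfin n τ := by
      funext j
      exact mrg_not_mem (fun hc => absurd hc (not_le.mpr j.isLt)) _ _
    simp only [Set.mem_preimage, he]
  have hind : ∀ τ, Set.indicator (rfin (Ω := Ω) n ⁻¹' t) (avg μ {j | n ≤ j} X) τ
      = avg μ {j | n ≤ j} (Set.indicator (rfin n ⁻¹' t) X) τ := by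
    intro τ
    by_cases h : τ ∈ rfin (Ω := Ω) n ⁻¹' t
    · rw [Set.indicator_of_mem h]
      unfold avg
      congr 1
      funext σ
      rw [Set.indicator_of_mem ((hmem τ σ).mpr h)]
    · rw [Set.indicator_of_notMem h]
      symm
      show (∫ σ, Set.indicator (rfin (Ω := Ω) n ⁻¹' t) X (mrg {j | n ≤ j} σ τ) ∂μ) = 0
      have he : ∀ σ, Set.indicator (rfin (Ω := Ω) n ⁻¹' t) X (mrg {j | n ≤ j} σ τ) = 0 :=
        fun σ => Set.indicator_of_notMem (fun hc => h ((hmem τ σ).mp hc)) _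
      simp only [he, integral_zero]
  have hXind : Integrable (Set.indicator (rfin (Ω := Ω) n ⁻¹' t) X) μ := hXi.indicator hpre
  calc ∫ x in rfin (Ω := Ω) n ⁻¹' t, avg μ {j | n ≤ j} X x ∂μ
      = ∫ x, Set.indicator (rfin (Ω := Ω) n ⁻¹' t) (avg μ {j | n ≤ j} X) x ∂μ :=
        (integral_indicator hpre).symm
    _ = ∫ x, avg μ {j | n ≤ j} (Set.indicator (rfin n ⁻¹' t) X) x ∂μ :=
        integral_congr_ae (Filter.Eventually.of_forall hind)
    _ = ∫ x, Set.indicator (rfin (Ω := Ω) n ⁻¹' t) X x ∂μ := integral_avg hprod _ hXind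
    _ = ∫ x in rfin (Ω := Ω) n ⁻¹' t, X x ∂μ := integral_indicator hpre

lemma tendsto_Mn (hprod : IsProd μi μ) {X : (∀ i, Ω i) → ℝ} (hX : Measurable X)
    (hXi : Integrable X μ) :
    ∀ᵐ τ ∂μ, Filter.Tendsto (fun n => avg μ {j | n ≤ j} X τ) Filter.atTop (nhds (X τ)) := by
  have hSM : StronglyMeasurable[⨆ n, (filt (Ω := Ω)) n] X :=
    hX.stronglyMeasurable.mono pi_le_iSup_filt
  have hconv := hXi.tendsto_ae_condExp (ℱ := filt (Ω := Ω)) hSM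
  have hall : ∀ᵐ τ ∂μ, ∀ n : ℕ, avg μ {j | n ≤ j} X τ = (μ[X | (filt (Ω := Ω)) n]) τ := by
    rw [ae_all_iff]
    exact fun n => Mn_eq_condexp hprod hX hXi n
  filter_upwards [hconv, hall] with τ h1 h2
  have he : (fun n => avg μ {j | n ≤ j} X τ) = fun n => (μ[X | (filt (Ω := Ω)) n]) τ :=
    funext h2
  rw [he]
  exact h1

end Levy

end EntTensor

open EntTensor in
/-- **Tensorization of entropy.**
Let `(Ωᵢ, μᵢ)` be probability spaces and let `μ` be the product measure `∏ᵢ μᵢ` on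
`∏ᵢ Ωᵢ` (characterized by its values on measurable cylinders). If `X ≥ 0` is measurable
with `X` and `X log X` integrable, then `Ent_μ(X) ≤ ∑ᵢ E_μ[Entᵢ(X)]`, where `Entᵢ(X)`
is the entropy of `X` with respect to `μᵢ` as a function of the `i`-th coordinate only,
all other coordinates being held fixed. -/
theorem entropy_tensorization
    {Ω : ℕ → Type} [∀ i, MeasurableSpace (Ω i)]
    (μi : ∀ i, Measure (Ω i)) [∀ i, IsProbabilityMeasure (μi i)]
    (μ : Measure (∀ i, Ω i)) [IsProbabilityMeasure μ]
    (hprod : ∀ (s : Finset ℕ) (A : ∀ i, Set (Ω i)), (∀ i, MeasurableSet (A i)) →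
      μ (Set.pi ↑s A) = ∏ i ∈ s, μi i (A i))
    (X : (∀ i, Ω i) → ℝ) (hXmeas : Measurable X) (hXpos : ∀ ω, 0 ≤ X ω)
    (hXint : Integrable X μ)
    (hXlogint : Integrable (fun ω => X ω * Real.log (X ω)) μ) :
    ENNReal.ofReal (∫ ω, X ω * Real.log (X ω) ∂μ
        - (∫ ω, X ω ∂μ) * Real.log (∫ ω, X ω ∂μ))
      ≤ ∑' i : ℕ, ∫⁻ ω, entNN (μi i) (fun y => X (Function.update ω i y)) ∂μ := by
  classical
  have hprod' : IsProd μi μ := hprod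
  have hMint : ∀ n : ℕ, Integrable (avg μ {j | n ≤ j} X) μ :=
    fun n => integrable_avg hprod' _ hXint
  have hMEX : ∀ n : ℕ, ∫ τ, avg μ {j | n ≤ j} X τ ∂μ = ∫ ω, X ω ∂μ :=
    fun n => integral_avg hprod' _ hXint
  have hMφ : ∀ n : ℕ, Integrable
      (fun τ => avg μ {j | n ≤ j} X τ * Real.log (avg μ {j | n ≤ j} X τ)) μ :=
    fun n => integrable_phi_avg hprod' _ hXmeas hXpos hXint hXlogint
  have hMnn : ∀ (n : ℕ) τ, 0 ≤ avg μ {j | n ≤ j} X τ := fun n => avg_nonneg _ hXpos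
  have hMm : ∀ n : ℕ, Measurable (avg μ {j | n ≤ j} X) := fun n => measurable_avg _ hXmeas
  have hJn : ∀ n : ℕ, (∫ ω, X ω ∂μ) * Real.log (∫ ω, X ω ∂μ)
      ≤ ∫ τ, avg μ {j | n ≤ j} X τ * Real.log (avg μ {j | n ≤ j} X τ) ∂μ := by
    intro n
    have h := jensen_phi (hMint n) (Filter.Eventually.of_forall (hMnn n)) (hMφ n)
    rwa [hMEX n] at h
  have hJX : (∫ ω, X ω ∂μ) * Real.log (∫ ω, X ω ∂μ) ≤ ∫ ω, X ω * Real.log (X ω) ∂μ :=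
    jensen_phi hXint (Filter.Eventually.of_forall hXpos) hXlogint
  have hEXnn : 0 ≤ ∫ ω, X ω ∂μ := integral_nonneg hXpos
  have hclb : -(Real.exp 1)⁻¹ ≤ (∫ ω, X ω ∂μ) * Real.log (∫ ω, X ω ∂μ) := phi_lb hEXnn
  -- Step 1: for each n, the entropy of the tail-averaged function is controlled.
  have hTEL : ∀ n : ℕ, ENNReal.ofReal
      ((∫ τ, avg μ {j | n ≤ j} X τ * Real.log (avg μ {j | n ≤ j} X τ) ∂μ)
        - (∫ ω, X ω ∂μ) * Real.log (∫ ω, X ω ∂μ))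
      ≤ ∑' i : ℕ, ∫⁻ ω, entNN (μi i) (fun y => X (Function.update ω i y)) ∂μ := by
    intro n
    set SS : ℕ → Set ℕ := fun k => {j | j < k} ∪ {j | n ≤ j} with hSS
    set F : ℕ → ℝ := fun k => ∫ τ, avg μ (SS k) X τ * Real.log (avg μ (SS k) X τ) ∂μ with hF
    have hS0 : SS 0 = {j | n ≤ j} := by
      ext j; simp [hSS]
    have hSn : SS n = Set.univ := by
      ext j
      simp only [hSS, Set.mem_union, Set.mem_setOf_eq, Set.mem_univ, iff_true]
      omega
    have hF0 : F 0 = ∫ τ, avg μ {j | n ≤ j} X τ * Real.log (avg μ {j | n ≤ j} X τ) ∂μ := by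
      show (∫ τ, avg μ (SS 0) X τ * Real.log (avg μ (SS 0) X τ) ∂μ) = _
      rw [hS0]
    have hFn : F n = (∫ ω, X ω ∂μ) * Real.log (∫ ω, X ω ∂μ) := by
      show (∫ τ, avg μ (SS n) X τ * Real.log (avg μ (SS n) X τ) ∂μ) = _
      rw [hSn]
      have he : ∀ τ, avg μ Set.univ X τ = ∫ ω, X ω ∂μ := avg_univ X
      simp only [he]
      simp [integral_const]
    have htele : F 0 - F n = ∑ k ∈ Finset.range n, (F k - F (k + 1)) :=
      (Finset.sum_range_sub' F n).symm
    rw [← hF0, ← hFn, htele]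
    calc ENNReal.ofReal (∑ k ∈ Finset.range n, (F k - F (k + 1)))
        ≤ ∑ k ∈ Finset.range n, ENNReal.ofReal (F k - F (k + 1)) := ofReal_sum_le _ _
      _ ≤ ∑ k ∈ Finset.range n,
          ∫⁻ ω, entNN (μi k) (fun y => X (Function.update ω k y)) ∂μ := by
          refine Finset.sum_le_sum fun k hk => ?_
          have hkn := Finset.mem_range.mp hk
          have hins : SS (k + 1) = insert k (SS k) := by
            ext j
            simp only [hSS, Set.mem_union, Set.mem_setOf_eq, Set.mem_insert_iff]
            omega
          have hnotmem : k ∉ SS k := by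
            simp only [hSS, Set.mem_union, Set.mem_setOf_eq]
            omega
          show ENNReal.ofReal ((∫ τ, avg μ (SS k) X τ * Real.log (avg μ (SS k) X τ) ∂μ)
              - ∫ τ, avg μ (SS (k+1)) X τ * Real.log (avg μ (SS (k+1)) X τ) ∂μ) ≤ _
          rw [hins]
          exact step hprod' hnotmem hXmeas hXpos hXint hXlogint
      _ ≤ ∑' i : ℕ, ∫⁻ ω, entNN (μi i) (fun y => X (Function.update ω i y)) ∂μ :=
          ENNReal.sum_le_tsum _
  -- Step 2: Fatou's lemma along the martingale convergence.
  have htendsto := tendsto_Mn hprod' hXmeas hXint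
  have hperN : ∀ n : ℕ, ∫⁻ τ, ENNReal.ofReal
      (avg μ {j | n ≤ j} X τ * Real.log (avg μ {j | n ≤ j} X τ) + (Real.exp 1)⁻¹) ∂μ
      = ENNReal.ofReal ((∫ τ, avg μ {j | n ≤ j} X τ * Real.log (avg μ {j | n ≤ j} X τ) ∂μ)
        + (Real.exp 1)⁻¹) := by
    intro n
    have hint : Integrable (fun τ => avg μ {j | n ≤ j} X τ * Real.log (avg μ {j | n ≤ j} X τ)
        + (Real.exp 1)⁻¹) μ := (hMφ n).add (integrable_const _)
    rw [← ofReal_integral_eq_lintegral_ofReal hint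
      (Filter.Eventually.of_forall fun τ => by
        have := phi_lb (hMnn n τ)
        show (0:ℝ) ≤ _
        linarith)]
    congr 1
    rw [integral_add (hMφ n) (integrable_const _), integral_const, probReal_univ,
      one_smul]
  have hfatou : ENNReal.ofReal ((∫ ω, X ω * Real.log (X ω) ∂μ) + (Real.exp 1)⁻¹)
      ≤ Filter.liminf (fun n => ENNReal.ofReal
          ((∫ τ, avg μ {j | n ≤ j} X τ * Real.log (avg μ {j | n ≤ j} X τ) ∂μ)
            + (Real.exp 1)⁻¹)) Filter.atTop := by
    have h1 : ∀ᵐ τ ∂μ, ENNReal.ofReal (X τ * Real.log (X τ) + (Real.exp 1)⁻¹)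
        = Filter.liminf (fun n => ENNReal.ofReal
            (avg μ {j | n ≤ j} X τ * Real.log (avg μ {j | n ≤ j} X τ) + (Real.exp 1)⁻¹))
            Filter.atTop := by
      filter_upwards [htendsto] with τ hτ
      have hcont : Filter.Tendsto (fun n => ENNReal.ofReal
          (avg μ {j | n ≤ j} X τ * Real.log (avg μ {j | n ≤ j} X τ) + (Real.exp 1)⁻¹))
          Filter.atTop (nhds (ENNReal.ofReal (X τ * Real.log (X τ) + (Real.exp 1)⁻¹))) := by
        refine (ENNReal.continuous_ofReal.tendsto _).comp ?_
        exact ((Real.continuous_mul_log.add continuous_const).tendsto _).comp hτ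
      exact hcont.liminf_eq.symm
    calc ENNReal.ofReal ((∫ ω, X ω * Real.log (X ω) ∂μ) + (Real.exp 1)⁻¹)
        = ∫⁻ τ, ENNReal.ofReal (X τ * Real.log (X τ) + (Real.exp 1)⁻¹) ∂μ := by
          have hint2 : Integrable (fun τ => X τ * Real.log (X τ) + (Real.exp 1)⁻¹) μ :=
            hXlogint.add (integrable_const _)
          rw [← ofReal_integral_eq_lintegral_ofReal hint2
            (Filter.Eventually.of_forall fun τ => by
              have := phi_lb (hXpos τ)
              show (0:ℝ) ≤ _
              linarith)]
          congr 1
          rw [integral_add hXlogint (integrable_const _), integral_const, probReal_univ,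
            one_smul]
      _ = ∫⁻ τ, Filter.liminf (fun n => ENNReal.ofReal
            (avg μ {j | n ≤ j} X τ * Real.log (avg μ {j | n ≤ j} X τ) + (Real.exp 1)⁻¹))
            Filter.atTop ∂μ := lintegral_congr_ae h1
      _ ≤ Filter.liminf (fun n => ∫⁻ τ, ENNReal.ofReal
            (avg μ {j | n ≤ j} X τ * Real.log (avg μ {j | n ≤ j} X τ) + (Real.exp 1)⁻¹) ∂μ)
            Filter.atTop := by
          refine lintegral_liminf_le fun n => ?_
          exact ENNReal.measurable_ofReal.comp
            (((hMm n).mul (Real.measurable_log.comp (hMm n))).add measurable_const)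
      _ = Filter.liminf (fun n => ENNReal.ofReal
            ((∫ τ, avg μ {j | n ≤ j} X τ * Real.log (avg μ {j | n ≤ j} X τ) ∂μ)
              + (Real.exp 1)⁻¹)) Filter.atTop := by
          congr 1
          exact funext hperN
  -- Step 3: combine.
  have hbound : ∀ n : ℕ, ENNReal.ofReal
      ((∫ τ, avg μ {j | n ≤ j} X τ * Real.log (avg μ {j | n ≤ j} X τ) ∂μ) + (Real.exp 1)⁻¹)
      ≤ (∑' i : ℕ, ∫⁻ ω, entNN (μi i) (fun y => X (Function.update ω i y)) ∂μ)
        + ENNReal.ofReal ((∫ ω, X ω ∂μ) * Real.log (∫ ω, X ω ∂μ) + (Real.exp 1)⁻¹) := by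
    intro n
    have hsplit : (∫ τ, avg μ {j | n ≤ j} X τ * Real.log (avg μ {j | n ≤ j} X τ) ∂μ)
        + (Real.exp 1)⁻¹
        = ((∫ τ, avg μ {j | n ≤ j} X τ * Real.log (avg μ {j | n ≤ j} X τ) ∂μ)
            - (∫ ω, X ω ∂μ) * Real.log (∫ ω, X ω ∂μ))
          + ((∫ ω, X ω ∂μ) * Real.log (∫ ω, X ω ∂μ) + (Real.exp 1)⁻¹) := by ring
    rw [hsplit, ENNReal.ofReal_add (by linarith [hJn n]) (by linarith)]
    exact add_le_add (hTEL n) le_rfl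
  have hliminf_le : Filter.liminf (fun n => ENNReal.ofReal
      ((∫ τ, avg μ {j | n ≤ j} X τ * Real.log (avg μ {j | n ≤ j} X τ) ∂μ)
        + (Real.exp 1)⁻¹)) Filter.atTop
      ≤ (∑' i : ℕ, ∫⁻ ω, entNN (μi i) (fun y => X (Function.update ω i y)) ∂μ)
        + ENNReal.ofReal ((∫ ω, X ω ∂μ) * Real.log (∫ ω, X ω ∂μ) + (Real.exp 1)⁻¹) := by
    calc Filter.liminf _ Filter.atTop
        ≤ Filter.liminf (fun _ : ℕ =>
            (∑' i : ℕ, ∫⁻ ω, entNN (μi i) (fun y => X (Function.update ω i y)) ∂μ)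
            + ENNReal.ofReal ((∫ ω, X ω ∂μ) * Real.log (∫ ω, X ω ∂μ) + (Real.exp 1)⁻¹))
            Filter.atTop :=
          Filter.liminf_le_liminf (Filter.Eventually.of_forall hbound)
      _ = _ := Filter.liminf_const _
  have hmain := hfatou.trans hliminf_le
  have hsplit2 : (∫ ω, X ω * Real.log (X ω) ∂μ) + (Real.exp 1)⁻¹
      = ((∫ ω, X ω * Real.log (X ω) ∂μ) - (∫ ω, X ω ∂μ) * Real.log (∫ ω, X ω ∂μ))
        + ((∫ ω, X ω ∂μ) * Real.log (∫ ω, X ω ∂μ) + (Real.exp 1)⁻¹) := by ring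
  rw [hsplit2, ENNReal.ofReal_add (by linarith) (by linarith)] at hmain
  exact (ENNReal.add_le_add_iff_right ENNReal.ofReal_ne_top).mp hmain
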